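/- Let ε > 0, r ∈ (0,1], and y > ε. Then M_P(y + ε − rε, y + ε) ≥ M_P(y − ε + rε, y − ε). -/

import Mathlib

noncomputable def MP (z lam : ℝ) : ℝ := z - lam + z * Real.log (lam / z)

lemma key_log (z : ℝ) (hz : 0 ≤ z) : 2 * z / (2 + z) ≤ Real.log (1 + z) := by
  have mono : MonotoneOn (fun x : ℝ => Real.log (1 + x) - 2 * x / (2 + x)) (Set.Ici 0) := by
    apply monotoneOn_of_deriv_nonneg (convex_Ici 0)
    · apply ContinuousOn.sub
      · apply ContinuousOn.log (by fun_prop)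
        intro x hx
        have : (0:ℝ) ≤ x := hx
        positivity
      · apply ContinuousOn.div (by fun_prop) (by fun_prop)
        intro x hx
        have : (0:ℝ) ≤ x := hx
        positivity
    · intro x hx
      rw [interior_Ici] at hx
      have hx0 : (0:ℝ) < x := hx
      have h1 : (1:ℝ) + x ≠ 0 := by positivity
      have h2 : (2:ℝ) + x ≠ 0 := by positivity
      apply DifferentiableAt.differentiableWithinAt
      apply DifferentiableAt.sub
      · exact (((differentiable_const _).add differentiable_id).differentiableAt).log h1
      · exact DifferentiableAt.div (by fun_prop) (by fun_prop) h2
    · intro x hx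
      rw [interior_Ici] at hx
      have hx0 : (0:ℝ) < x := hx
      have h1 : (1:ℝ) + x ≠ 0 := by positivity
      have h2 : (2:ℝ) + x ≠ 0 := by positivity
      have hd1 : HasDerivAt (fun x : ℝ => Real.log (1 + x)) (1 / (1 + x)) x := by
        have := ((hasDerivAt_id x).const_add 1).log h1
        simpa using this
      have hd2 : HasDerivAt (fun x : ℝ => 2 * x / (2 + x))
          ((2 * (2 + x) - 2 * x * 1) / (2 + x) ^ 2) x := by
        have := ((hasDerivAt_id' x).const_mul 2).div ((hasDerivAt_id' x).const_add 2) h2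
        rw [mul_one] at this
        exact this
      have hd : HasDerivAt (fun x : ℝ => Real.log (1 + x) - 2 * x / (2 + x))
          (1 / (1 + x) - (2 * (2 + x) - 2 * x * 1) / (2 + x) ^ 2) x := hd1.sub hd2
      rw [hd.deriv]
      rw [sub_nonneg, div_le_div_iff₀ (by positivity) (by positivity)]
      nlinarith
  have := mono (Set.self_mem_Ici) (Set.mem_Ici.mpr hz) hz
  simp at this
  linarith

/-- For `ε > 0`, `r ∈ (0,1]`, `y > ε`:
`M_P(y + ε − rε, y + ε) ≥ M_P(y − ε + rε, y − ε)`. -/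
theorem mp_abs_error_ineq (ε r y : ℝ) (hε : 0 < ε) (hr0 : 0 < r) (hr1 : r ≤ 1)
    (hy : ε < y) :
    MP (y + ε - r * ε) (y + ε) ≥ MP (y - ε + r * ε) (y - ε) := by
  set s := r * ε with hs
  have hs0 : 0 < s := mul_pos hr0 hε
  have hsε : s ≤ ε := by nlinarith
  have hl2 : 0 < y - ε := by linarith
  have hu : 0 < y + ε - s := by linarith
  have hz2 : 0 < y - ε + s := by linarith
  -- rewrite the log arguments
  have e1 : (y + ε) / (y + ε - s) = 1 + s / (y + ε - s) := by field_simp; ring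
  have e2 : (y - ε) / (y - ε + s) = (1 + s / (y - ε))⁻¹ := by
    rw [inv_eq_one_div]
    field_simp
  have h1 := key_log (s / (y + ε - s)) (by positivity)
  have h2 := key_log (s / (y - ε)) (by positivity)
  have hlog2 : Real.log ((y - ε) / (y - ε + s)) = - Real.log (1 + s / (y - ε)) := by
    rw [e2, Real.log_inv]
  unfold MP
  rw [e1, hlog2]
  -- now multiply the key inequalities
  have m1 : (y + ε - s) * (2 * (s / (y + ε - s)) / (2 + s / (y + ε - s)))
      ≤ (y + ε - s) * Real.log (1 + s / (y + ε - s)) :=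
    mul_le_mul_of_nonneg_left h1 hu.le
  have m2 : (y - ε + s) * (2 * (s / (y - ε)) / (2 + s / (y - ε)))
      ≤ (y - ε + s) * Real.log (1 + s / (y - ε)) :=
    mul_le_mul_of_nonneg_left h2 hz2.le
  have q1 : (y + ε - s) * (2 * (s / (y + ε - s)) / (2 + s / (y + ε - s)))
      = 2 * s * (y + ε - s) / (2 * (y + ε - s) + s) := by
    have hne2 : (2 : ℝ) + s / (y + ε - s) ≠ 0 := by positivity
    have hne3 : 2 * (y + ε - s) + s ≠ 0 := by positivity
    field_simp
  have q2 : (y - ε + s) * (2 * (s / (y - ε)) / (2 + s / (y - ε)))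
      = 2 * s * (y - ε + s) / (2 * (y - ε) + s) := by
    have hne2 : (2 : ℝ) + s / (y - ε) ≠ 0 := by positivity
    have hne3 : 2 * (y - ε) + s ≠ 0 := by positivity
    field_simp
  have key : 2 * s * (y + ε - s) / (2 * (y + ε - s) + s)
      + 2 * s * (y - ε + s) / (2 * (y - ε) + s) ≥ 2 * s := by
    rw [ge_iff_le, div_add_div _ _ (by positivity) (by positivity), le_div_iff₀ (by positivity)]
    nlinarith [sq_nonneg s, mul_pos hs0 hl2, mul_pos hs0 hs0]
  rw [q1] at m1
  rw [q2] at m2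
  nlinarith [m1, m2, key]
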